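/- For every real ν with ν ∉ {−1,−2,−3,…}, every real x ≥ 0, and every real t with |t| < 1, the series Σ_{m=0}^∞ q^{−νm/2} J_ν(x q^m; q) t^m/(q;q)_m converges and equals x^{ν/2} · (q^{ν+1};q)_∞ / ((q;q)_∞ (t;q)_∞) · Σ_{k=0}^∞ (−1)^k q^{k(k−1)/2} (t;q)_k (qx)^k / ((q;q)_k (q^{ν+1};q)_k). -/

import Mathlib

open scoped BigOperators

/-- The finite q-Pochhammer symbol `(a;q)_n`. -/
noncomputable def qPoch (q a : ℝ) (n : ℕ) : ℝ := ∏ k ∈ Finset.range n, (1 - a * q ^ k)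

/-- The infinite q-Pochhammer symbol `(a;q)_∞`. -/
noncomputable def qPochInf (q a : ℝ) : ℝ := ∏' k : ℕ, (1 - a * q ^ k)

/-- Jackson's third q-Bessel function `J_ν(x;q)` for real order `ν`. -/
noncomputable def qBessel (q ν x : ℝ) : ℝ :=
  x ^ (ν / 2) * (qPochInf q (q ^ (ν + 1)) / qPochInf q q) *
    ∑' k : ℕ, (-1 : ℝ) ^ k * q ^ (k * (k - 1) / 2) * (q * x) ^ k /
      (qPoch q q k * qPoch q (q ^ (ν + 1)) k)

/-- Jackson's third q-Bessel function of integer order, extended to negative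
integer orders by `J_{-n}(x;q) = (-1)^n q^{n/2} J_n(x q^n; q)`. -/
noncomputable def qBesselZ (q : ℝ) (ν : ℤ) (x : ℝ) : ℝ :=
  if 0 ≤ ν then qBessel q (ν : ℝ) x
  else (-1 : ℝ) ^ (-ν).toNat * q ^ (((-ν).toNat : ℝ) / 2) *
    qBessel q ((-ν).toNat : ℝ) (x * q ^ (-ν).toNat)

open Finset Filter

lemma exp_neg_two_mul_le {u : ℝ} (h0 : 0 ≤ u) (h2 : u ≤ 1/2) :
    Real.exp (-(2*u)) ≤ 1 - u := by
  have h1 : 1 + 2*u ≤ Real.exp (2*u) := by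
    have := Real.add_one_le_exp (2*u); linarith
  have hepos : (0:ℝ) < Real.exp (2*u) := Real.exp_pos _
  have key : 1 ≤ (1-u) * Real.exp (2*u) := by nlinarith
  rw [Real.exp_neg, inv_eq_one_div, div_le_iff₀ hepos]
  linarith

lemma prod_one_sub_ge_exp {u : ℕ → ℝ} (h0 : ∀ k, 0 ≤ u k) (h2 : ∀ k, u k ≤ 1/2) (s : Finset ℕ) :
    Real.exp (-(2 * ∑ k ∈ s, u k)) ≤ ∏ k ∈ s, (1 - u k) := by
  have h : Real.exp (-(2 * ∑ k ∈ s, u k)) = ∏ k ∈ s, Real.exp (-(2 * u k)) := by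
    rw [← Real.exp_sum]
    congr 1
    rw [Finset.mul_sum, ← Finset.sum_neg_distrib]
  rw [h]
  exact Finset.prod_le_prod (fun k _ => (Real.exp_pos _).le)
    (fun k _ => exp_neg_two_mul_le (h0 k) (h2 k))

lemma qPoch_abs_lower {q : ℝ} (hq0 : 0 < q) (hq1 : q < 1) (b : ℝ) (hb : 0 ≤ b)
    (hne : ∀ k : ℕ, b * q ^ k ≠ 1) :
    ∃ δ > 0, ∀ m : ℕ, δ ≤ |qPoch q b m| := by
  have hq1' : (1:ℝ) - q > 0 := by linarith
  -- choose K with b * q^K ≤ 1/2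
  obtain ⟨K, hK⟩ : ∃ K : ℕ, b * q ^ K ≤ 1/2 := by
    have h := (tendsto_pow_atTop_nhds_zero_of_lt_one hq0.le hq1).const_mul b
    rw [mul_zero] at h
    have := h.eventually_le_const (show (0:ℝ) < 1/2 by norm_num)
    exact this.exists
  set e : ℝ := Real.exp (-(1/(1-q))) with he
  have he1 : e ≤ 1 := by
    rw [he]
    apply Real.exp_le_one_iff.mpr
    have : 0 < 1/(1-q) := by positivity
    linarith
  have hepos : 0 < e := Real.exp_pos _
  have hfaczero : ∀ m : ℕ, qPoch q b m ≠ 0 := by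
    intro m
    apply Finset.prod_ne_zero_iff.mpr
    intro k _
    intro hzero
    exact hne k (by linarith [sub_eq_zero.mp hzero])
  have hnonempty : (Finset.range (K+1)).Nonempty := ⟨0, by simp⟩
  set M : ℝ := Finset.inf' (Finset.range (K+1)) hnonempty (fun k => |qPoch q b k|) with hM
  have hMpos : 0 < M := by
    rw [hM, Finset.lt_inf'_iff]
    exact fun k _ => abs_pos.mpr (hfaczero k)
  have hMle : ∀ m ≤ K, M ≤ |qPoch q b m| := fun m hm =>
    Finset.inf'_le _ (Finset.mem_range.mpr (Nat.lt_succ_of_le hm))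
  refine ⟨M * e, mul_pos hMpos hepos, fun m => ?_⟩
  rcases le_or_gt m K with hm | hm
  · calc M * e ≤ M * 1 := by nlinarith
      _ = M := mul_one M
      _ ≤ |qPoch q b m| := hMle m hm
  · -- m > K : split the product
    have hmk : m = K + (m - K) := by omega
    set n := m - K with hn
    have hsplit : qPoch q b m = qPoch q b K * ∏ j ∈ Finset.range n, (1 - (b * q ^ K) * q ^ j) := by
      rw [hmk]
      rw [qPoch, Finset.prod_range_add]
      congr 1
      apply Finset.prod_congr rfl
      intro j _
      rw [pow_add]
      ring
    have hu0 : ∀ j : ℕ, 0 ≤ (b * q ^ K) * q ^ j := fun j => by positivity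
    have hu2 : ∀ j : ℕ, (b * q ^ K) * q ^ j ≤ 1/2 := by
      intro j
      calc (b * q ^ K) * q ^ j ≤ (1/2) * q ^ j := by
            apply mul_le_mul_of_nonneg_right hK (by positivity)
        _ ≤ (1/2) * 1 := by
            apply mul_le_mul_of_nonneg_left (pow_le_one₀ hq0.le hq1.le) (by norm_num)
        _ = 1/2 := mul_one _
    have htail : e ≤ ∏ j ∈ Finset.range n, (1 - (b * q ^ K) * q ^ j) := by
      refine le_trans ?_ (prod_one_sub_ge_exp hu0 hu2 (Finset.range n))
      apply Real.exp_le_exp.mpr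
      have hgeom : ∑ j ∈ Finset.range n, q ^ j ≤ 1/(1-q) := by
        rw [geom_sum_eq (ne_of_lt hq1)]
        have h2 : (q ^ n - 1)/(q - 1) = (1 - q ^ n)/(1 - q) := by
          rw [← neg_div_neg_eq]; congr 1 <;> ring
        rw [h2, div_le_div_iff₀ hq1' hq1']
        nlinarith [pow_nonneg hq0.le n]
      have hsum : ∑ j ∈ Finset.range n, (b * q ^ K) * q ^ j ≤ 1/2 * (1/(1-q)) := by
        rw [← Finset.mul_sum]
        have hs0 : 0 ≤ ∑ j ∈ Finset.range n, q ^ j := Finset.sum_nonneg (fun j _ => pow_nonneg hq0.le j)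
        nlinarith [mul_le_mul hK hgeom hs0 (by norm_num : (0:ℝ) ≤ 1/2)]
      linarith
    have htailnonneg : 0 ≤ ∏ j ∈ Finset.range n, (1 - (b * q ^ K) * q ^ j) :=
      le_trans hepos.le htail
    rw [hsplit, abs_mul, abs_of_nonneg htailnonneg]
    have h1 : M ≤ |qPoch q b K| := hMle K le_rfl
    exact mul_le_mul h1 htail hepos.le (abs_nonneg _)

variable {q : ℝ}

lemma factor_pos (hq0 : 0 < q) (hq1 : q < 1) {z : ℝ} (hz : |z| < 1) (k : ℕ) :
    0 < 1 - z * q ^ k := by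
  have h1 : z * q ^ k ≤ |z| * q ^ k :=
    mul_le_mul_of_nonneg_right (le_abs_self z) (by positivity)
  have h2 : |z| * q ^ k ≤ |z| * 1 :=
    mul_le_mul_of_nonneg_left (pow_le_one₀ hq0.le hq1.le) (abs_nonneg z)
  have := abs_nonneg z
  nlinarith

lemma qPoch_pos (hq0 : 0 < q) (hq1 : q < 1) {z : ℝ} (hz : |z| < 1) (m : ℕ) :
    0 < qPoch q z m :=
  Finset.prod_pos fun k _ => factor_pos hq0 hq1 hz k

lemma qPoch_lower (hq0 : 0 < q) (hq1 : q < 1) {z : ℝ} (hz : |z| < 1) :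
    ∃ δ > 0, ∀ m : ℕ, δ ≤ qPoch q z m := by
  obtain ⟨δ, hδ, hle⟩ := qPoch_abs_lower hq0 hq1 |z| (abs_nonneg z)
    (fun k => by
      have h2 : |z| * q ^ k ≤ |z| * 1 :=
        mul_le_mul_of_nonneg_left (pow_le_one₀ hq0.le hq1.le) (abs_nonneg z)
      intro h; rw [h] at h2; simp at h2; linarith)
  refine ⟨δ, hδ, fun m => ?_⟩
  have habs : |z| < 1 := hz
  have h1 : qPoch q |z| m ≤ qPoch q z m := by
    apply Finset.prod_le_prod
    · intro k _
      have := factor_pos hq0 hq1 (z := |z|) (by rwa [abs_abs]) k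
      linarith
    · intro k _
      have : z * q ^ k ≤ |z| * q ^ k :=
        mul_le_mul_of_nonneg_right (le_abs_self z) (by positivity)
      linarith
  have h2 := hle m
  rw [abs_of_pos (qPoch_pos hq0 hq1 (z := |z|) (by rwa [abs_abs]) m)] at h2
  linarith

lemma hasProd_qPochInf (hq0 : 0 < q) (hq1 : q < 1) {z : ℝ} (hz : |z| < 1) :
    HasProd (fun k : ℕ => 1 - z * q ^ k) (qPochInf q z) := by
  have hlog : Summable (fun n : ℕ => Real.log (1 - z * q ^ n)) := by
    apply Summable.of_norm_bounded (g := fun n => (|z|/(1-|z|)) * q ^ n)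
      ((summable_geometric_of_lt_one hq0.le hq1).mul_left _)
    intro n
    have hzq : |z * q ^ n| < 1 := by
      rw [abs_mul, abs_pow, abs_of_pos hq0]
      calc |z| * q ^ n ≤ |z| * 1 :=
            mul_le_mul_of_nonneg_left (pow_le_one₀ hq0.le hq1.le) (abs_nonneg z)
        _ = |z| := mul_one _
        _ < 1 := hz
    have h := Real.abs_log_sub_add_sum_range_le hzq 0
    simp only [Finset.range_zero, Finset.sum_empty, zero_add, pow_one] at h
    rw [Real.norm_eq_abs]
    refine h.trans ?_
    rw [abs_mul, abs_pow, abs_of_pos hq0]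
    have h1 : 1 - |z| ≤ 1 - |z| * q ^ n := by
      have : |z| * q ^ n ≤ |z| * 1 :=
        mul_le_mul_of_nonneg_left (pow_le_one₀ hq0.le hq1.le) (abs_nonneg z)
      linarith
    have h2 : 0 < 1 - |z| := by linarith
    calc |z| * q ^ n / (1 - |z| * q ^ n) ≤ |z| * q ^ n / (1 - |z|) :=
          div_le_div_of_nonneg_left (by positivity) h2 h1
      _ = |z| / (1 - |z|) * q ^ n := by ring
  have := (Real.multipliable_of_summable_log (fun k => factor_pos hq0 hq1 hz k) hlog).hasProd
  exact this

lemma tendsto_qPoch (hq0 : 0 < q) (hq1 : q < 1) {z : ℝ} (hz : |z| < 1) :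
    Tendsto (fun n => qPoch q z n) atTop (nhds (qPochInf q z)) :=
  (hasProd_qPochInf hq0 hq1 hz).tendsto_prod_nat

lemma qPochInf_pos (hq0 : 0 < q) (hq1 : q < 1) {z : ℝ} (hz : |z| < 1) :
    0 < qPochInf q z := by
  obtain ⟨δ, hδ, hle⟩ := qPoch_lower hq0 hq1 hz
  exact lt_of_lt_of_le hδ (ge_of_tendsto' (tendsto_qPoch hq0 hq1 hz) hle)

lemma qPochInf_shift (hq0 : 0 < q) (hq1 : q < 1) {z : ℝ} (hz : |z| < 1) (k : ℕ) :
    qPochInf q z = qPoch q z k * qPochInf q (z * q ^ k) := by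
  have hz' : |z * q ^ k| < 1 := by
    rw [abs_mul, abs_pow, abs_of_pos hq0]
    calc |z| * q ^ k ≤ |z| * 1 :=
          mul_le_mul_of_nonneg_left (pow_le_one₀ hq0.le hq1.le) (abs_nonneg z)
      _ = |z| := mul_one _
      _ < 1 := hz
  have h1 : Tendsto (fun n => qPoch q z (n + k)) atTop (nhds (qPochInf q z)) :=
    (tendsto_qPoch hq0 hq1 hz).comp (tendsto_add_atTop_nat k)
  have h2 : (fun n => qPoch q z (n + k)) =
      fun n => qPoch q z k * qPoch q (z * q ^ k) n := by
    funext n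
    rw [add_comm, qPoch, Finset.prod_range_add]
    congr 1
    apply Finset.prod_congr rfl
    intro j _
    rw [pow_add]
    ring
  rw [h2] at h1
  have h3 : Tendsto (fun n => qPoch q z k * qPoch q (z * q ^ k) n) atTop
      (nhds (qPoch q z k * qPochInf q (z * q ^ k))) :=
    (tendsto_qPoch hq0 hq1 hz').const_mul _
  exact tendsto_nhds_unique h1 h3

lemma summable_euler (hq0 : 0 < q) (hq1 : q < 1) {δ : ℝ} (hδ : 0 < δ)
    (hδle : ∀ m : ℕ, δ ≤ qPoch q q m) {w : ℝ} (hw : |w| < 1) :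
    Summable (fun m : ℕ => w ^ m / qPoch q q m) := by
  apply Summable.of_norm_bounded (g := fun m => δ⁻¹ * |w| ^ m)
    ((summable_geometric_of_lt_one (abs_nonneg w) hw).mul_left _)
  intro m
  rw [Real.norm_eq_abs, abs_div, abs_pow,
    abs_of_pos (lt_of_lt_of_le hδ (hδle m))]
  rw [div_eq_mul_inv, mul_comm]
  apply mul_le_mul_of_nonneg_right ?_ (by positivity)
  exact inv_anti₀ hδ (hδle m)

set_option maxHeartbeats 800000 in
lemma euler_hasSum (hq0 : 0 < q) (hq1 : q < 1) {z : ℝ} (hz : |z| < 1) :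
    HasSum (fun m : ℕ => z ^ m / qPoch q q m) (1 / qPochInf q z) := by
  have hqq : |q| < 1 := by rwa [abs_of_pos hq0]
  obtain ⟨δ, hδ, hδle⟩ := qPoch_lower hq0 hq1 hqq
  have hqp : ∀ m, (0:ℝ) < qPoch q q m := fun m => qPoch_pos hq0 hq1 hqq m
  set E : ℝ → ℝ := fun w => ∑' m : ℕ, w ^ m / qPoch q q m with hE
  -- functional equation
  have funeq : ∀ w : ℝ, |w| < 1 → E (q * w) = (1 - w) * E w := by
    intro w hw
    have hS := summable_euler hq0 hq1 hδ hδle hw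
    have h1 : HasSum (fun m : ℕ => w ^ m / qPoch q q m) (E w) := hS.hasSum
    have h2 : HasSum (fun m : ℕ => w ^ (m + 1) / qPoch q q m) (w * E w) := by
      have h := h1.mul_left w
      have heq : (fun m : ℕ => w * (w ^ m / qPoch q q m)) =
          fun m : ℕ => w ^ (m + 1) / qPoch q q m := by
        funext m; rw [pow_succ]; ring
      rwa [heq] at h
    set g : ℕ → ℝ := fun m => w ^ m * (1 - q ^ m) / qPoch q q m with hg
    have hgsum : HasSum g (w * E w) := by
      have hshift : HasSum (fun n : ℕ => g (n + 1)) (w * E w) := by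
        have heq : (fun n : ℕ => w ^ (n + 1) / qPoch q q n) = fun n : ℕ => g (n + 1) := by
          funext n
          have hsplit : qPoch q q (n + 1) = qPoch q q n * (1 - q * q ^ n) := by
            rw [qPoch, Finset.prod_range_succ]; rfl
          have hne : (1 : ℝ) - q * q ^ n ≠ 0 := by
            have := factor_pos hq0 hq1 hqq n
            linarith
          have hne2 := (hqp n).ne'
          rw [hg]
          simp only [hsplit, pow_succ']
          field_simp
        rwa [heq] at h2
      have := (hasSum_nat_add_iff (f := g) 1).mp hshift
      simpa [hg, qPoch] using this
    have h3 : HasSum (fun m : ℕ => (q * w) ^ m / qPoch q q m) ((1 - w) * E w) := by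
      have := h1.sub hgsum
      have heq : (fun m : ℕ => w ^ m / qPoch q q m - g m) =
          fun m : ℕ => (q * w) ^ m / qPoch q q m := by
        funext m
        rw [hg]
        simp only
        rw [mul_pow]
        have := (hqp m).ne'
        field_simp
        ring
      rw [heq] at this
      convert this using 1
      · rfl
      ring
    exact h3.tsum_eq
  -- iteration
  have iter : ∀ n : ℕ, E z * qPoch q z n = E (z * q ^ n) := by
    intro n
    induction n with
    | zero => simp [qPoch]
    | succ n ih =>
      have hzn : |z * q ^ n| < 1 := by
        rw [abs_mul, abs_pow, abs_of_pos hq0]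
        calc |z| * q ^ n ≤ |z| * 1 :=
              mul_le_mul_of_nonneg_left (pow_le_one₀ hq0.le hq1.le) (abs_nonneg z)
          _ = |z| := mul_one _
          _ < 1 := hz
      have hstep : qPoch q z (n + 1) = qPoch q z n * (1 - z * q ^ n) := by
        rw [qPoch, Finset.prod_range_succ]; rfl
      rw [hstep, ← mul_assoc, ih, mul_comm]
      rw [← funeq (z * q ^ n) hzn]
      congr 1
      ring
  -- bound on |E w - 1|
  have bound1 : ∀ w : ℝ, |w| ≤ |z| → |E w - 1| ≤ δ⁻¹ * (1 - |z|)⁻¹ * |w| := by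
    intro w hw
    have hw1 : |w| < 1 := lt_of_le_of_lt hw hz
    have hS := summable_euler hq0 hq1 hδ hδle hw1
    have h1 : HasSum (fun m : ℕ => w ^ (m + 1) / qPoch q q (m + 1)) (E w - 1) := by
      apply (hasSum_nat_add_iff (f := fun m : ℕ => w ^ m / qPoch q q m) 1).mpr
      have : E w - 1 + ∑ i ∈ Finset.range 1, w ^ i / qPoch q q i = E w := by
        simp [qPoch]
      rw [this]
      exact hS.hasSum
    have hnorm : ∀ m : ℕ, ‖w ^ (m + 1) / qPoch q q (m + 1)‖ ≤ δ⁻¹ * |w| * |z| ^ m := by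
      intro m
      rw [Real.norm_eq_abs, abs_div, abs_pow, abs_of_pos (hqp (m + 1))]
      calc |w| ^ (m + 1) / qPoch q q (m + 1) ≤ |w| ^ (m + 1) / δ := by
            apply div_le_div_of_nonneg_left (by positivity) hδ (hδle (m + 1))
        _ = δ⁻¹ * |w| * |w| ^ m := by rw [pow_succ]; ring
        _ ≤ δ⁻¹ * |w| * |z| ^ m := by
            apply mul_le_mul_of_nonneg_left (pow_le_pow_left₀ (abs_nonneg w) hw m)
              (by positivity)
    have hgsummable : Summable (fun m : ℕ => δ⁻¹ * |w| * |z| ^ m) :=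
      (summable_geometric_of_lt_one (abs_nonneg z) hz).mul_left _
    have hEq : E w - 1 = ∑' m : ℕ, w ^ (m + 1) / qPoch q q (m + 1) := h1.tsum_eq.symm
    rw [hEq]
    have hns : Summable (fun m : ℕ => ‖w ^ (m + 1) / qPoch q q (m + 1)‖) :=
      Summable.of_nonneg_of_le (fun m => norm_nonneg _) hnorm hgsummable
    calc |∑' m : ℕ, w ^ (m + 1) / qPoch q q (m + 1)|
        ≤ ∑' m : ℕ, ‖w ^ (m + 1) / qPoch q q (m + 1)‖ := by
          rw [← Real.norm_eq_abs]
          exact norm_tsum_le_tsum_norm hns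
      _ ≤ ∑' m : ℕ, δ⁻¹ * |w| * |z| ^ m := hns.tsum_le_tsum hnorm hgsummable
      _ = δ⁻¹ * |w| * (1 - |z|)⁻¹ := by
          rw [tsum_mul_left, tsum_geometric_of_lt_one (abs_nonneg z) hz]
      _ = δ⁻¹ * (1 - |z|)⁻¹ * |w| := by ring
  -- limit of E (z q^n)
  have tend1 : Tendsto (fun n : ℕ => E (z * q ^ n)) atTop (nhds 1) := by
    rw [tendsto_iff_norm_sub_tendsto_zero]
    have hb : ∀ n : ℕ, ‖E (z * q ^ n) - 1‖ ≤ δ⁻¹ * (1 - |z|)⁻¹ * |z| * q ^ n := by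
      intro n
      rw [Real.norm_eq_abs]
      have habs : |z * q ^ n| ≤ |z| := by
        rw [abs_mul, abs_pow, abs_of_pos hq0]
        calc |z| * q ^ n ≤ |z| * 1 :=
              mul_le_mul_of_nonneg_left (pow_le_one₀ hq0.le hq1.le) (abs_nonneg z)
          _ = |z| := mul_one _
      have := bound1 (z * q ^ n) habs
      rw [abs_mul, abs_pow, abs_of_pos hq0] at this
      calc |E (z * q ^ n) - 1| ≤ δ⁻¹ * (1 - |z|)⁻¹ * (|z| * q ^ n) := this
        _ = δ⁻¹ * (1 - |z|)⁻¹ * |z| * q ^ n := by ring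
    have htend : Tendsto (fun n : ℕ => δ⁻¹ * (1 - |z|)⁻¹ * |z| * q ^ n) atTop (nhds 0) := by
      have := (tendsto_pow_atTop_nhds_zero_of_lt_one hq0.le hq1).const_mul
        (δ⁻¹ * (1 - |z|)⁻¹ * |z|)
      simpa using this
    exact squeeze_zero (fun n => norm_nonneg _) hb htend
  have tend2 : Tendsto (fun n : ℕ => E (z * q ^ n)) atTop (nhds (E z * qPochInf q z)) := by
    have := (tendsto_qPoch hq0 hq1 hz).const_mul (E z)
    exact this.congr iter
  have key : E z * qPochInf q z = 1 := tendsto_nhds_unique tend2 tend1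
  have hPpos := qPochInf_pos hq0 hq1 hz
  have hEz : E z = 1 / qPochInf q z := by
    field_simp
    linarith [key]
  have := (summable_euler hq0 hq1 hδ hδle hz).hasSum
  rwa [show (∑' m : ℕ, z ^ m / qPoch q q m) = E z from rfl, hEz] at this

set_option maxHeartbeats 1000000 in
/-- Generating function for Jackson's third q-Bessel functions
(Proposition 3.2 / "prop:generating function"). -/
theorem qBessel_generating_function (q : ℝ) (hq0 : 0 < q) (hq1 : q < 1)
    (ν : ℝ) (hν : ∀ n : ℕ, ν ≠ -((n : ℝ) + 1)) (x : ℝ) (hx : 0 ≤ x)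
    (t : ℝ) (ht : |t| < 1) :
    HasSum
      (fun m : ℕ => q ^ (-(ν * (m : ℝ)) / 2) * qBessel q ν (x * q ^ m) * t ^ m / qPoch q q m)
      (x ^ (ν / 2) * (qPochInf q (q ^ (ν + 1)) / (qPochInf q q * qPochInf q t)) *
        ∑' k : ℕ, (-1 : ℝ) ^ k * q ^ (k * (k - 1) / 2) * qPoch q t k * (q * x) ^ k /
          (qPoch q q k * qPoch q (q ^ (ν + 1)) k)) := by
  have hqq : |q| < 1 := by rwa [abs_of_pos hq0]
  have ht1 : ∀ k : ℕ, |t * q ^ k| < 1 := by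
    intro k
    rw [abs_mul, abs_pow, abs_of_pos hq0]
    calc |t| * q ^ k ≤ |t| * 1 :=
          mul_le_mul_of_nonneg_left (pow_le_one₀ hq0.le hq1.le) (abs_nonneg t)
      _ = |t| := mul_one _
      _ < 1 := ht
  have hb2pos : (0:ℝ) < q ^ (ν + 1) := Real.rpow_pos_of_pos hq0 _
  have hne2 : ∀ k : ℕ, q ^ (ν + 1) * q ^ k ≠ 1 := by
    intro k h
    have hq' : (q:ℝ) ^ ((ν + 1) + (k:ℝ)) = 1 := by
      rw [Real.rpow_add hq0, Real.rpow_natCast]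
      exact h
    have hlog := congrArg Real.log hq'
    rw [Real.log_rpow hq0, Real.log_one] at hlog
    have hlq : Real.log q ≠ 0 := ne_of_lt (Real.log_neg hq0 hq1)
    have h0 : (ν + 1) + (k:ℝ) = 0 := by
      rcases mul_eq_zero.mp hlog with h' | h'
      · exact h'
      · exact absurd h' hlq
    exact hν k (by linarith)
  obtain ⟨δ2, hδ2, h2le⟩ := qPoch_abs_lower hq0 hq1 (q ^ (ν + 1)) hb2pos.le hne2
  obtain ⟨δ1, hδ1, h1le⟩ := qPoch_lower hq0 hq1 hqq
  have hqp : ∀ m, (0:ℝ) < qPoch q q m := qPoch_pos hq0 hq1 hqq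
  set a : ℕ → ℝ := fun k => (-1:ℝ) ^ k * q ^ (k * (k - 1) / 2) * (q * x) ^ k /
    (qPoch q q k * qPoch q (q ^ (ν + 1)) k) with ha
  -- summability of the base sequence
  have hbase : Summable (fun k : ℕ => q ^ (k * (k - 1) / 2) * (q * x) ^ k) := by
    apply summable_of_ratio_norm_eventually_le (r := 1/2) (by norm_num)
    have htend : Filter.Tendsto (fun k : ℕ => q ^ k * (q * x)) Filter.atTop (nhds 0) := by
      simpa using (tendsto_pow_atTop_nhds_zero_of_lt_one hq0.le hq1).mul_const (q * x)
    filter_upwards [htend.eventually_le_const (show (0:ℝ) < 1/2 by norm_num)] with k hk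
    have hexp : (k + 1) * ((k + 1) - 1) / 2 = k * (k - 1) / 2 + k := by
      cases k with
      | zero => rfl
      | succ j =>
        simp only [Nat.add_sub_cancel]
        rw [show (j + 1 + 1) * (j + 1) = (j + 1) * j + 2 * (j + 1) from by ring,
          Nat.add_mul_div_left _ _ (by norm_num : 0 < 2)]
    rw [Real.norm_eq_abs, Real.norm_eq_abs, abs_of_nonneg (by positivity),
      abs_of_nonneg (by positivity)]
    calc q ^ ((k + 1) * ((k + 1) - 1) / 2) * (q * x) ^ (k + 1)
        = (q ^ (k * (k - 1) / 2) * (q * x) ^ k) * (q ^ k * (q * x)) := by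
          rw [hexp, pow_add, pow_succ]; ring
      _ ≤ (q ^ (k * (k - 1) / 2) * (q * x) ^ k) * (1/2) :=
          mul_le_mul_of_nonneg_left hk (by positivity)
      _ = 1/2 * (q ^ (k * (k - 1) / 2) * (q * x) ^ k) := by ring
  have hanorm : ∀ k, ‖a k‖ ≤ (δ1 * δ2)⁻¹ * (q ^ (k * (k - 1) / 2) * (q * x) ^ k) := by
    intro k
    have hnum : |(-1:ℝ) ^ k * q ^ (k * (k - 1) / 2) * (q * x) ^ k|
        = q ^ (k * (k - 1) / 2) * (q * x) ^ k := by
      rw [abs_mul, abs_mul, abs_pow, abs_pow, abs_pow, abs_neg, abs_one, one_pow, one_mul,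
        abs_of_pos hq0, abs_of_nonneg (by positivity : (0:ℝ) ≤ q * x)]
    have hden : |qPoch q q k * qPoch q (q ^ (ν + 1)) k|
        = qPoch q q k * |qPoch q (q ^ (ν + 1)) k| := by
      rw [abs_mul, abs_of_pos (hqp k)]
    rw [Real.norm_eq_abs, ha]
    simp only
    rw [abs_div, hnum, hden]
    have hd : δ1 * δ2 ≤ qPoch q q k * |qPoch q (q ^ (ν + 1)) k| :=
      mul_le_mul (h1le k) (h2le k) hδ2.le (le_trans hδ1.le (h1le k))
    calc q ^ (k * (k - 1) / 2) * (q * x) ^ k / (qPoch q q k * |qPoch q (q ^ (ν + 1)) k|)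
        ≤ q ^ (k * (k - 1) / 2) * (q * x) ^ k / (δ1 * δ2) :=
          div_le_div_of_nonneg_left (by positivity) (by positivity) hd
      _ = (δ1 * δ2)⁻¹ * (q ^ (k * (k - 1) / 2) * (q * x) ^ k) := by ring
  have hsa : Summable a := Summable.of_norm_bounded (hbase.mul_left _) hanorm
  have hqmk : ∀ m k : ℕ, |((q:ℝ) ^ m) ^ k| ≤ 1 := by
    intro m k
    rw [abs_pow, abs_pow, abs_of_pos hq0]
    exact pow_le_one₀ (by positivity) (pow_le_one₀ hq0.le hq1.le)
  have hsak : ∀ m : ℕ, Summable (fun k : ℕ => a k * ((q:ℝ) ^ m) ^ k) := by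
    intro m
    apply Summable.of_norm_bounded (g := fun k => ‖a k‖) hsa.abs
    intro k
    rw [norm_mul]
    calc ‖a k‖ * ‖((q:ℝ) ^ m) ^ k‖ ≤ ‖a k‖ * 1 :=
          mul_le_mul_of_nonneg_left (hqmk m k) (norm_nonneg _)
      _ = ‖a k‖ := mul_one _
  set G : ℕ × ℕ → ℝ :=
    fun p => t ^ p.1 / qPoch q q p.1 * (a p.2 * ((q:ℝ) ^ p.1) ^ p.2) with hGdef
  have hG : Summable G := by
    apply Summable.of_norm_bounded (g := fun p : ℕ × ℕ => δ1⁻¹ * |t| ^ p.1 * ‖a p.2‖)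
    · exact Summable.mul_of_nonneg
        ((summable_geometric_of_lt_one (abs_nonneg t) ht).mul_left δ1⁻¹)
        hsa.abs (fun m => by positivity) (fun k => abs_nonneg (a k))
    · rintro ⟨m, k⟩
      rw [hGdef]
      simp only
      rw [norm_mul, norm_mul]
      have h1 : ‖t ^ m / qPoch q q m‖ ≤ δ1⁻¹ * |t| ^ m := by
        rw [Real.norm_eq_abs, abs_div, abs_pow, abs_of_pos (hqp m), div_eq_mul_inv, mul_comm]
        exact mul_le_mul_of_nonneg_right (inv_anti₀ hδ1 (h1le m)) (by positivity)
      have h2 : ‖a k‖ * ‖((q:ℝ) ^ m) ^ k‖ ≤ ‖a k‖ := by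
        calc ‖a k‖ * ‖((q:ℝ) ^ m) ^ k‖ ≤ ‖a k‖ * 1 :=
              mul_le_mul_of_nonneg_left (hqmk m k) (norm_nonneg _)
          _ = ‖a k‖ := mul_one _
      calc ‖t ^ m / qPoch q q m‖ * (‖a k‖ * ‖((q:ℝ) ^ m) ^ k‖)
          ≤ (δ1⁻¹ * |t| ^ m) * ‖a k‖ :=
            mul_le_mul h1 h2 (by positivity) (by positivity)
        _ = δ1⁻¹ * |t| ^ m * ‖a k‖ := by ring
  have hfib1 : ∀ m : ℕ, HasSum (fun k => G (m, k))
      (t ^ m / qPoch q q m * ∑' k : ℕ, a k * ((q:ℝ) ^ m) ^ k) :=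
    fun m => ((hsak m).hasSum).mul_left _
  have H1 : HasSum (fun m : ℕ => t ^ m / qPoch q q m * ∑' k : ℕ, a k * ((q:ℝ) ^ m) ^ k)
      (∑' p : ℕ × ℕ, G p) := hG.hasSum.prod_fiberwise hfib1
  have hfib2 : ∀ k : ℕ, HasSum (fun m => G (m, k))
      (a k * (qPoch q t k / qPochInf q t)) := by
    intro k
    have htk : |t * q ^ k| < 1 := ht1 k
    have he := (euler_hasSum hq0 hq1 htk).mul_left (a k)
    have heq : (fun m : ℕ => a k * ((t * q ^ k) ^ m / qPoch q q m)) = fun m => G (m, k) := by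
      funext m
      rw [hGdef]
      simp only
      rw [mul_pow, pow_right_comm]
      ring
    rw [heq] at he
    have hval : a k * (1 / qPochInf q (t * q ^ k)) = a k * (qPoch q t k / qPochInf q t) := by
      congr 1
      have hshift := qPochInf_shift hq0 hq1 ht k
      have h1 : qPochInf q (t * q ^ k) ≠ 0 := (qPochInf_pos hq0 hq1 htk).ne'
      have h2 : (0:ℝ) < qPoch q t k := qPoch_pos hq0 hq1 ht k
      rw [hshift]
      field_simp
    rwa [hval] at he
  have hGs : Summable (fun p : ℕ × ℕ => G p.swap) := hG.prod_symm
  have H2 : HasSum (fun k : ℕ => a k * (qPoch q t k / qPochInf q t))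
      (∑' p : ℕ × ℕ, G p.swap) :=
    hGs.hasSum.prod_fiberwise (fun k => hfib2 k)
  have hSwapEq : ∑' p : ℕ × ℕ, G p.swap = ∑' p : ℕ × ℕ, G p :=
    (Equiv.prodComm ℕ ℕ).tsum_eq G
  set X : ℝ := x ^ (ν / 2) * (qPochInf q (q ^ (ν + 1)) / qPochInf q q) with hX
  -- identify the function
  have hfun : ∀ m : ℕ,
      q ^ (-(ν * (m : ℝ)) / 2) * qBessel q ν (x * q ^ m) * t ^ m / qPoch q q m
      = X * (t ^ m / qPoch q q m * ∑' k : ℕ, a k * ((q:ℝ) ^ m) ^ k) := by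
    intro m
    have hqm : (0:ℝ) ≤ q ^ m := by positivity
    have hts : (∑' k : ℕ, (-1:ℝ) ^ k * q ^ (k * (k - 1) / 2) * (q * (x * q ^ m)) ^ k /
        (qPoch q q k * qPoch q (q ^ (ν + 1)) k)) = ∑' k : ℕ, a k * ((q:ℝ) ^ m) ^ k := by
      apply tsum_congr
      intro k
      rw [show q * (x * q ^ m) = (q * x) * q ^ m from by ring, mul_pow, ha]
      simp only
      ring
    have hrpow : (x * q ^ m) ^ (ν / 2) = x ^ (ν / 2) * q ^ ((m:ℝ) * (ν / 2)) := by
      rw [Real.mul_rpow hx hqm]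
      congr 1
      rw [← Real.rpow_natCast q m, ← Real.rpow_mul hq0.le]
    have hcollapse : q ^ (-(ν * (m:ℝ)) / 2) * q ^ ((m:ℝ) * (ν / 2)) = (1:ℝ) := by
      rw [← Real.rpow_add hq0, show -(ν * (m:ℝ)) / 2 + (m:ℝ) * (ν / 2) = 0 from by ring,
        Real.rpow_zero]
    rw [qBessel, hts, hrpow, hX]
    have hrw : q ^ (-(ν * (m:ℝ)) / 2) *
        (x ^ (ν / 2) * q ^ ((m:ℝ) * (ν / 2)) * (qPochInf q (q ^ (ν + 1)) / qPochInf q q) *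
          (∑' k : ℕ, a k * ((q:ℝ) ^ m) ^ k)) * t ^ m / qPoch q q m
        = (q ^ (-(ν * (m:ℝ)) / 2) * q ^ ((m:ℝ) * (ν / 2))) *
          (x ^ (ν / 2) * (qPochInf q (q ^ (ν + 1)) / qPochInf q q) *
            (t ^ m / qPoch q q m * ∑' k : ℕ, a k * ((q:ℝ) ^ m) ^ k)) := by
      ring
    rw [hrw, hcollapse, one_mul]
  -- identify the value
  have hTpos : (0:ℝ) < qPochInf q t := qPochInf_pos hq0 hq1 ht
  have hQpos : (0:ℝ) < qPochInf q q := qPochInf_pos hq0 hq1 hqq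
  have hvalue : X * (∑' p : ℕ × ℕ, G p)
      = x ^ (ν / 2) * (qPochInf q (q ^ (ν + 1)) / (qPochInf q q * qPochInf q t)) *
        ∑' k : ℕ, (-1 : ℝ) ^ k * q ^ (k * (k - 1) / 2) * qPoch q t k * (q * x) ^ k /
          (qPoch q q k * qPoch q (q ^ (ν + 1)) k) := by
    have h1 : ∑' p : ℕ × ℕ, G p = ∑' k : ℕ, a k * (qPoch q t k / qPochInf q t) := by
      rw [← hSwapEq]
      exact H2.tsum_eq.symm
    have h2 : (∑' k : ℕ, a k * (qPoch q t k / qPochInf q t))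
        = (∑' k : ℕ, a k * qPoch q t k) * (qPochInf q t)⁻¹ := by
      rw [← tsum_mul_right]
      apply tsum_congr
      intro k
      ring
    have h3 : (∑' k : ℕ, (-1 : ℝ) ^ k * q ^ (k * (k - 1) / 2) * qPoch q t k * (q * x) ^ k /
          (qPoch q q k * qPoch q (q ^ (ν + 1)) k)) = ∑' k : ℕ, a k * qPoch q t k := by
      apply tsum_congr
      intro k
      rw [ha]
      simp only
      ring
    rw [h1, h2, h3, hX]
    field_simp
  have hfeq : (fun m : ℕ =>
      q ^ (-(ν * (m : ℝ)) / 2) * qBessel q ν (x * q ^ m) * t ^ m / qPoch q q m)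
      = fun m : ℕ => X * (t ^ m / qPoch q q m * ∑' k : ℕ, a k * ((q:ℝ) ^ m) ^ k) :=
    funext hfun
  rw [hfeq, ← hvalue]
  exact H1.mul_left X
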